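/- The set 𝒜̄⁺₁ := {φ ∈ H¹(ℝ²) : S₁(φ) < S₁(Q₁), P₁(φ) ≥ 0} satisfies 𝒜̄⁺₁ = 𝒜⁺₁ ∪ {0}, and 𝒜̄⁺₁ is an open subset of H¹(ℝ²). -/

import Mathlib

open MeasureTheory Real Filter
open scoped Topology ENNReal

noncomputable section

abbrev E2 : Type := EuclideanSpace ℝ (Fin 2)

/-- Squared `L²` norm. -/
def l2Sq (u : E2 → ℂ) : ℝ := ∫ x : E2, ‖u x‖ ^ 2

/-- Squared `L²` norm of the gradient. -/
def gradSq (u : E2 → ℂ) : ℝ := ∫ x : E2, ‖fderiv ℝ u x‖ ^ 2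

/-- Membership in `H¹(ℝ²)`. -/
def MemH1 (u : E2 → ℂ) : Prop :=
  MemLp u 2 volume ∧ Differentiable ℝ u ∧ MemLp (fun x => fderiv ℝ u x) 2 volume

/-- Integrability of all exponentials `e^{a|u|²} - 1`. -/
def ExpIntegrable (u : E2 → ℂ) : Prop :=
  ∀ a : ℝ, 0 < a → Integrable (fun x : E2 => Real.exp (a * ‖u x‖ ^ 2) - 1)

/-- The nonlinearity `f_μ`. -/
def fmu (μ : ℝ) (z : ℂ) : ℂ :=
  ((Real.exp (4 * π * ‖z‖ ^ 2) - 1 - 4 * π * μ * ‖z‖ ^ 2 : ℝ) : ℂ) * z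

/-- The potential `F_μ`. -/
def Fmu (μ : ℝ) (z : ℂ) : ℝ :=
  (Real.exp (4 * π * ‖z‖ ^ 2) - 1 - 4 * π * ‖z‖ ^ 2 - 8 * π ^ 2 * μ * ‖z‖ ^ 4) / (8 * π)

/-- `Re (z̄ f_μ(z))`. -/
def nlDensity (μ : ℝ) (z : ℂ) : ℝ :=
  (Real.exp (4 * π * ‖z‖ ^ 2) - 1 - 4 * π * μ * ‖z‖ ^ 2) * ‖z‖ ^ 2

/-- Energy. -/
def Emu (μ : ℝ) (u : E2 → ℂ) : ℝ := gradSq u / 2 - ∫ x : E2, Fmu μ (u x)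

/-- Action. -/
def Smu (μ : ℝ) (u : E2 → ℂ) : ℝ := Emu μ u + l2Sq u / 2

/-- The functional `P_μ`. -/
def Pmu (μ : ℝ) (u : E2 → ℂ) : ℝ := l2Sq u / 2 - ∫ x : E2, Fmu μ (u x)

/-- The virial functional `I_μ`. -/
def Imu (μ : ℝ) (u : E2 → ℂ) : ℝ :=
  gradSq u - ∫ x : E2, (nlDensity μ (u x) - 2 * Fmu μ (u x))

/-- Laplacian on `ℝ²` (sum of second directional derivatives). -/
def lap (v : E2 → ℂ) (x : E2) : ℂ :=
  ∑ i : Fin 2, fderiv ℝ (fun y => fderiv ℝ v y (EuclideanSpace.single i 1)) x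
      (EuclideanSpace.single i 1)

/-- `φ` is a (pointwise) solution to the elliptic equation `-Δφ + φ = f_μ(φ)`. -/
def IsEllipticSolution (μ : ℝ) (φ : E2 → ℂ) : Prop :=
  ∀ x, -lap φ x + φ x = fmu μ (φ x)

/-- Ground state for `-ΔQ + Q = f_μ(Q)`. -/
structure IsGroundState (μ : ℝ) (Q : E2 → ℂ) : Prop where
  mem : MemH1 Q
  expint : ExpIntegrable Q
  nonzero : ¬ Q =ᵐ[volume] (0 : E2 → ℂ)
  radial : ∀ x y : E2, ‖x‖ = ‖y‖ → Q x = Q y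
  solves : IsEllipticSolution μ Q
  minimal : ∀ φ : E2 → ℂ, MemH1 φ → ExpIntegrable φ → ¬ φ =ᵐ[volume] (0 : E2 → ℂ) →
    IsEllipticSolution μ φ → Smu μ Q ≤ Smu μ φ
  grad_pos : 0 < gradSq Q
  grad_lt_one : gradSq Q < 1

noncomputable def Efn (t : ℝ) : ℝ := Real.exp t - 1 - t - t^2/2

lemma Efn_summable (t : ℝ) (k : ℕ) : Summable (fun n : ℕ => t^(n+k)/(Nat.factorial (n+k))) := by
  exact (summable_nat_add_iff k).2 (Real.summable_pow_div_factorial t)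

lemma Efn_eq (t : ℝ) : Efn t = ∑' n : ℕ, t^(n+3)/(Nat.factorial (n+3)) := by
  have h := Summable.sum_add_tsum_nat_add 3 (Real.summable_pow_div_factorial t)
  have hexp : Real.exp t = ∑' n : ℕ, t^n/(Nat.factorial n) := by
    rw [Real.exp_eq_exp_ℝ, NormedSpace.exp_eq_tsum_div]
  simp [Finset.sum_range_succ] at h
  rw [Efn, hexp, ← h]
  norm_num [Nat.factorial]
  ring

lemma Efn_nonneg {t : ℝ} (ht : 0 ≤ t) : 0 ≤ Efn t := by
  rw [Efn_eq]
  exact tsum_nonneg (fun n => by positivity)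

lemma Efn_pos {t : ℝ} (ht : 0 < t) : 0 < Efn t := by
  have h1 : t^(0+3)/(Nat.factorial (0+3)) ≤ Efn t := by
    rw [Efn_eq]
    exact Summable.le_tsum (Efn_summable t 3) 0 (fun j _ => by positivity)
  have : 0 < t^(0+3)/(Nat.factorial (0+3)) := by positivity
  linarith

lemma Efn_mono {t₁ t₂ : ℝ} (h0 : 0 ≤ t₁) (h : t₁ ≤ t₂) : Efn t₁ ≤ Efn t₂ := by
  rw [Efn_eq, Efn_eq]
  refine Summable.tsum_le_tsum (fun n => ?_) (Efn_summable t₁ 3) (Efn_summable t₂ 3)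
  gcongr

lemma Efn_scale {r t : ℝ} (hr0 : 0 ≤ r) (hr1 : r ≤ 1) (ht : 0 ≤ t) :
    Efn (r * t) ≤ r^3 * Efn t := by
  rw [Efn_eq, Efn_eq, ← tsum_mul_left]
  refine Summable.tsum_le_tsum (fun n => ?_) (Efn_summable (r*t) 3) ((Efn_summable t 3).mul_left _)
  rw [mul_pow, mul_div_assoc]
  exact mul_le_mul_of_nonneg_right (pow_le_pow_of_le_one hr0 hr1 (by omega)) (by positivity)

lemma pow_sub_pow_le' {a b : ℝ} (h0 : 0 ≤ a) (hab : a ≤ b) (k : ℕ) :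
    b^k - a^k ≤ k * (b - a) * b^(k-1) := by
  induction k with
  | zero => simp
  | succ n ih =>
    have hb : 0 ≤ b := le_trans h0 hab
    have h1 : b^(n+1) - a^(n+1) = b*(b^n - a^n) + (b-a)*a^n := by ring
    have h2 : b*(b^n - a^n) ≤ b * (n*(b-a)*b^(n-1)) := by
      apply mul_le_mul_of_nonneg_left ih hb
    have h3 : (b-a)*a^n ≤ (b-a)*b^n := by
      apply mul_le_mul_of_nonneg_left (pow_le_pow_left₀ h0 hab n) (by linarith)
    have h4 : b * (n*(b-a)*b^(n-1)) ≤ n*(b-a)*b^n := by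
      rcases Nat.eq_zero_or_pos n with hn | hn
      · subst hn; simp
      · have : b * (↑n*(b-a)*b^(n-1)) = ↑n*(b-a)*(b^(n-1)*b) := by ring
        rw [this, ← pow_succ]
        have : n - 1 + 1 = n := by omega
        rw [this]
    push_cast
    rw [h1]
    nlinarith [h2, h3, h4]

lemma Efn_lip {t₁ t₂ : ℝ} (h0 : 0 ≤ t₁) (h : t₁ ≤ t₂) :
    Efn t₂ - Efn t₁ ≤ (t₂ - t₁) * Real.exp t₂ := by
  have ht2 : 0 ≤ t₂ := le_trans h0 h
  rw [Efn_eq, Efn_eq, ← Summable.tsum_sub (Efn_summable t₂ 3) (Efn_summable t₁ 3)]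
  have step1 : ∑' n : ℕ, (t₂^(n+3)/(Nat.factorial (n+3)) - t₁^(n+3)/(Nat.factorial (n+3)))
      ≤ ∑' n : ℕ, (t₂ - t₁) * (t₂^(n+2)/(Nat.factorial (n+2))) := by
    refine Summable.tsum_le_tsum (fun n => ?_) ((Efn_summable t₂ 3).sub (Efn_summable t₁ 3))
      ((Efn_summable t₂ 2).mul_left _)
    rw [div_sub_div_same]
    rw [div_le_iff₀ (by positivity)]
    have hk0 := pow_sub_pow_le' h0 h (n+3)
    have hk : t₂^(n+3) - t₁^(n+3) ≤ ((n:ℝ)+3) * (t₂ - t₁) * t₂^(n+2) := by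
      have h31 : n+3-1 = n+2 := by omega
      rw [h31] at hk0
      push_cast at hk0
      convert hk0 using 2
    calc t₂^(n+3) - t₁^(n+3) ≤ ((n:ℝ)+3) * (t₂ - t₁) * t₂^(n+2) := hk
      _ = (t₂ - t₁) * (t₂^(n+2)) * (n+3) := by ring
      _ ≤ (t₂ - t₁) * (t₂^(n+2)/(Nat.factorial (n+2))) * (Nat.factorial (n+3)) := by
          rw [mul_assoc, mul_assoc]
          apply mul_le_mul_of_nonneg_left _ (by linarith)
          rw [div_mul_eq_mul_div]
          rw [le_div_iff₀ (by positivity)]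
          have : (Nat.factorial (n+3) : ℝ) = (n+3) * (Nat.factorial (n+2)) := by
            rw [Nat.factorial_succ]; push_cast; ring
          rw [this]
          ring_nf
          rfl
  have step2 : ∑' n : ℕ, (t₂ - t₁) * (t₂^(n+2)/(Nat.factorial (n+2))) ≤ (t₂ - t₁) * Real.exp t₂ := by
    rw [tsum_mul_left]
    apply mul_le_mul_of_nonneg_left _ (by linarith)
    have hexp : Real.exp t₂ = ∑' n : ℕ, t₂^n/(Nat.factorial n) := by
      rw [Real.exp_eq_exp_ℝ, NormedSpace.exp_eq_tsum_div]
    have h := Summable.sum_add_tsum_nat_add 2 (Real.summable_pow_div_factorial t₂)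
    rw [hexp, ← h]
    have : 0 ≤ ∑ i ∈ Finset.range 2, t₂^i/(Nat.factorial i) := by
      apply Finset.sum_nonneg; intro i _; positivity
    linarith
  linarith


lemma pi_pos' : (0:ℝ) < π := Real.pi_pos

lemma Fmu_one_eq (z : ℂ) : Fmu 1 z = Efn (4*π*‖z‖^2) / (8*π) := by
  rw [Fmu, Efn]; ring

lemma Fmu_nonneg (z : ℂ) : 0 ≤ Fmu 1 z := by
  rw [Fmu_one_eq]
  have := Efn_nonneg (t := 4*π*‖z‖^2) (by positivity)
  positivity

lemma Fmu_mono {z w : ℂ} (h : ‖z‖ ≤ ‖w‖) : Fmu 1 z ≤ Fmu 1 w := by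
  rw [Fmu_one_eq, Fmu_one_eq]
  have h8 : (0:ℝ) < 8*π := by positivity
  have := Efn_mono (t₁ := 4*π*‖z‖^2) (t₂ := 4*π*‖w‖^2) (by positivity)
    (by gcongr)
  exact div_le_div_of_nonneg_right this h8.le

lemma Fmu_zero_iff {z : ℂ} (h : Fmu 1 z = 0) : z = 0 := by
  by_contra hz
  have hn : 0 < ‖z‖ := lt_of_le_of_ne (norm_nonneg z) (fun h' => hz (norm_eq_zero.1 h'.symm))
  have := Efn_pos (t := 4*π*‖z‖^2) (by positivity)
  rw [Fmu_one_eq] at h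
  have h8 : (0:ℝ) < 8*π := by positivity
  rw [div_eq_zero_iff] at h
  rcases h with h | h
  · linarith
  · linarith

lemma Fmu_cont : Continuous (fun z : ℂ => Fmu 1 z) := by
  unfold Fmu; fun_prop


lemma Fmu_diff_le (z w : ℂ) :
    Fmu 1 z - Fmu 1 w ≤ (‖z‖ * Real.exp (4*π*‖z‖^2)) * ‖z - w‖ := by
  have hpi := pi_pos'
  rcases le_or_gt ‖z‖ ‖w‖ with h | h
  · have h1 : Fmu 1 z ≤ Fmu 1 w := Fmu_mono h
    have h2 : (0:ℝ) ≤ (‖z‖ * Real.exp (4*π*‖z‖^2)) * ‖z - w‖ := by positivity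
    linarith
  · have hw := norm_nonneg w
    have hz := norm_nonneg z
    have hlip := Efn_lip (t₁ := 4*π*‖w‖^2) (t₂ := 4*π*‖z‖^2) (by positivity)
      (by gcongr)
    rw [Fmu_one_eq, Fmu_one_eq, div_sub_div_same, div_le_iff₀ (by positivity)]
    have hnw : ‖z‖ - ‖w‖ ≤ ‖z - w‖ := norm_sub_norm_le z w
    have h2 : 4*π*‖z‖^2 - 4*π*‖w‖^2 = 4*π*(‖z‖+‖w‖)*(‖z‖-‖w‖) := by ring
    have h3 : 4*π*(‖z‖+‖w‖)*(‖z‖-‖w‖) ≤ 4*π*(2*‖z‖)*‖z - w‖ := by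
      apply mul_le_mul (by nlinarith) hnw (by linarith) (by positivity)
    calc Efn (4*π*‖z‖^2) - Efn (4*π*‖w‖^2)
        ≤ (4*π*‖z‖^2 - 4*π*‖w‖^2) * Real.exp (4*π*‖z‖^2) := hlip
      _ ≤ (4*π*(2*‖z‖)*‖z - w‖) * Real.exp (4*π*‖z‖^2) := by
          rw [h2]; exact mul_le_mul_of_nonneg_right h3 (Real.exp_nonneg _)
      _ = ‖z‖ * Real.exp (4*π*‖z‖^2) * ‖z - w‖ * (8*π) := by ring

lemma Fmu_smul_le {c : ℝ} (hc0 : 0 ≤ c) (hc1 : c ≤ 1) (z : ℂ) :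
    Fmu 1 (c • z) ≤ c^6 * Fmu 1 z := by
  have hpi := pi_pos'
  rw [Fmu_one_eq, Fmu_one_eq]
  have hn : ‖c • z‖^2 = c^2 * ‖z‖^2 := by
    rw [norm_smul, Real.norm_eq_abs, mul_pow, sq_abs]
  have harg : 4*π*‖c • z‖^2 = c^2 * (4*π*‖z‖^2) := by rw [hn]; ring
  rw [harg]
  have := Efn_scale (r := c^2) (t := 4*π*‖z‖^2) (by positivity) (by nlinarith) (by positivity)
  calc Efn (c^2 * (4*π*‖z‖^2)) / (8*π) ≤ (c^2)^3 * Efn (4*π*‖z‖^2) / (8*π) := by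
        apply div_le_div_of_nonneg_right this (by positivity)
      _ = c^6 * (Efn (4*π*‖z‖^2) / (8*π)) := by ring


section IntLemmas
open MeasureTheory

lemma int_sq {u : E2 → ℂ} (hu : MemLp u 2 volume) :
    Integrable (fun x => ‖u x‖^2) := by
  have h := hu.integrable_norm_rpow (by norm_num) (by norm_num)
  have : ((2:ℝ≥0∞).toReal) = (2:ℝ) := by norm_num
  rw [this] at h
  refine h.congr (Filter.Eventually.of_forall (fun x => ?_))
  show ‖u x‖ ^ (2:ℝ) = ‖u x‖ ^ (2:ℕ)
  rw [show (2:ℝ) = ((2:ℕ):ℝ) by norm_num, Real.rpow_natCast]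

lemma exp_sq_bound {t : ℝ} (ht : 0 ≤ t) : t^2/2 ≤ Real.exp t - 1 := by
  have := Efn_nonneg ht
  rw [Efn] at this; linarith

lemma int_pow4 {u : E2 → ℂ} (hmeas : AEStronglyMeasurable u volume)
    (hexp : ExpIntegrable u) : Integrable (fun x => ‖u x‖^4) := by
  have hpi := pi_pos'
  have hint := (hexp (4*π) (by positivity)).const_mul (1/(8*π^2))
  refine hint.mono' ?_ (Filter.Eventually.of_forall (fun x => ?_))
  · exact (continuous_pow 4).comp_aestronglyMeasurable hmeas.norm
  · have ht : (0:ℝ) ≤ 4*π*‖u x‖^2 := by positivity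
    have h2 := exp_sq_bound ht
    have h3 : (4*π*‖u x‖^2)^2/2 = 8*π^2*‖u x‖^4 := by ring
    rw [h3] at h2
    rw [Real.norm_eq_abs, abs_of_nonneg (by positivity),
      show (1/(8*π^2)) * (Real.exp (4*π*‖u x‖^2) - 1) = (Real.exp (4*π*‖u x‖^2) - 1)/(8*π^2) from by ring,
      le_div_iff₀ (by positivity)]
    nlinarith [h2]

lemma int_F {u : E2 → ℂ} (hu : MemLp u 2 volume) (hexp : ExpIntegrable u) :
    Integrable (fun x => Fmu 1 (u x)) := by
  have hpi := pi_pos'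
  have h1 := (hexp (4*π) (by positivity)).const_mul (1/(8*π))
  have h2 := (int_sq hu).const_mul (1/2 : ℝ)
  have h3 := (int_pow4 hu.aestronglyMeasurable hexp).const_mul π
  refine ((h1.sub h2).sub h3).congr (Filter.Eventually.of_forall (fun x => ?_))
  simp only [Fmu, Pi.sub_apply]
  field_simp
  ring

lemma int_K2 {u : E2 → ℂ} (hmeas : AEStronglyMeasurable u volume)
    (hexp : ExpIntegrable u) :
    Integrable (fun x => (‖u x‖ * Real.exp (4*π*‖u x‖^2))^2) := by
  have hpi := pi_pos'
  have hint := (hexp (9*π) (by positivity)).const_mul (1/π)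
  refine hint.mono' ?_ (Filter.Eventually.of_forall (fun x => ?_))
  · exact ((show Continuous fun z : ℂ => (‖z‖ * Real.exp (4*π*‖z‖^2))^2 by fun_prop).comp_aestronglyMeasurable hmeas)
  · rw [Real.norm_eq_abs, abs_of_nonneg (by positivity)]
    have hs := norm_nonneg (u x)
    set s := ‖u x‖
    have h1 : s^2 ≤ (Real.exp (π*s^2) - 1)/π := by
      rw [le_div_iff₀ hpi]
      nlinarith [Real.add_one_le_exp (π*s^2)]
    have h2 : (s * Real.exp (4*π*s^2))^2 = s^2 * Real.exp (8*π*s^2) := by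
      rw [mul_pow, ← Real.exp_nat_mul, show ((2:ℕ):ℝ)*(4*π*s^2) = 8*π*s^2 by push_cast; ring]
    rw [h2]
    have h3 : s^2 * Real.exp (8*π*s^2) ≤ (Real.exp (π*s^2) - 1)/π * Real.exp (8*π*s^2) :=
      mul_le_mul_of_nonneg_right h1 (Real.exp_nonneg _)
    have h4 : (Real.exp (π*s^2) - 1)/π * Real.exp (8*π*s^2) = (Real.exp (9*π*s^2) - Real.exp (8*π*s^2))/π := by
      rw [div_mul_eq_mul_div, sub_mul, one_mul, ← Real.exp_add,
        show π*s^2+8*π*s^2 = 9*π*s^2 by ring]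
    have h5 : Real.exp (8*π*s^2) ≥ 1 := Real.one_le_exp (by positivity)
    calc s^2 * Real.exp (8*π*s^2) ≤ (Real.exp (9*π*s^2) - Real.exp (8*π*s^2))/π := by rw [← h4]; exact h3
      _ ≤ (Real.exp (9*π*s^2) - 1)/π := div_le_div_of_nonneg_right (by linarith) hpi.le
      _ = 1/π * (Real.exp (9*π*s^2) - 1) := by ring

end IntLemmas


section MoreLemmas
open MeasureTheory

lemma intF_nonneg (u : E2 → ℂ) : 0 ≤ ∫ x : E2, Fmu 1 (u x) :=
  integral_nonneg (fun x => Fmu_nonneg (u x))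

lemma gradSq_nonneg (u : E2 → ℂ) : 0 ≤ gradSq u :=
  integral_nonneg (fun x => by positivity)

lemma l2Sq_nonneg (u : E2 → ℂ) : 0 ≤ l2Sq u :=
  integral_nonneg (fun x => by positivity)

lemma Smu_decomp (u : E2 → ℂ) : Smu 1 u = gradSq u / 2 + Pmu 1 u := by
  rw [Smu, Emu, Pmu]; ring

lemma l2Sq_pos {u : E2 → ℂ} (hu : MemLp u 2 volume)
    (hne : ¬ u =ᵐ[volume] (0 : E2 → ℂ)) : 0 < l2Sq u := by
  rcases lt_or_eq_of_le (l2Sq_nonneg u) with h | h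
  · exact h
  · exfalso
    apply hne
    have h0 := (integral_eq_zero_iff_of_nonneg (fun x => by positivity) (int_sq hu)).1 h.symm
    filter_upwards [h0] with x hx
    simp only [Pi.zero_apply] at hx ⊢
    have : ‖u x‖ = 0 := by nlinarith [norm_nonneg (u x), hx]
    exact norm_eq_zero.1 this

lemma l2Sq_zero_of_ae {u : E2 → ℂ} (h : u =ᵐ[volume] (0 : E2 → ℂ)) : l2Sq u = 0 := by
  rw [l2Sq]
  rw [integral_congr_ae (g := fun _ => (0:ℝ)) (by filter_upwards [h] with x hx; simp [hx])]
  simp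

lemma intF_zero_of_ae {u : E2 → ℂ} (h : u =ᵐ[volume] (0 : E2 → ℂ)) :
    ∫ x : E2, Fmu 1 (u x) = 0 := by
  have heq : (fun x => Fmu 1 (u x)) =ᵐ[volume] (fun _ => (0:ℝ)) := by
    filter_upwards [h] with x hx
    simp only [Pi.zero_apply] at hx
    rw [hx]
    simp [Fmu]
  rw [integral_congr_ae heq, integral_zero]

lemma l2Sq_smul (c : ℝ) (u : E2 → ℂ) : l2Sq (fun x => c • u x) = c^2 * l2Sq u := by
  rw [l2Sq, l2Sq, ← integral_const_mul]
  congr 1; funext x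
  rw [norm_smul, Real.norm_eq_abs, mul_pow, sq_abs]

lemma gradSq_smul (c : ℝ) {u : E2 → ℂ} (hu : Differentiable ℝ u) :
    gradSq (fun x => c • u x) = c^2 * gradSq u := by
  rw [gradSq, gradSq, ← integral_const_mul]
  congr 1; funext x
  rw [fderiv_fun_const_smul (hu x) c]
  rw [norm_smul c (fderiv ℝ u x), Real.norm_eq_abs, mul_pow, sq_abs]

lemma memH1_smul (c : ℝ) {u : E2 → ℂ} (hu : MemH1 u) : MemH1 (fun x => c • u x) := by
  obtain ⟨h2, hd, hg⟩ := hu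
  refine ⟨h2.const_smul c, hd.const_smul c, ?_⟩
  have : (fun x => fderiv ℝ (fun y => c • u y) x) = fun x => c • fderiv ℝ u x := by
    funext x; exact fderiv_const_smul (hd x) c
  rw [this]
  exact hg.const_smul c

lemma expint_smul {c : ℝ} (hc0 : 0 < c) {u : E2 → ℂ} (hu : ExpIntegrable u) :
    ExpIntegrable (fun x => c • u x) := by
  intro a ha
  have := hu (a * c^2) (by positivity)
  refine this.congr (Filter.Eventually.of_forall (fun x => ?_))
  simp only [norm_smul, Real.norm_eq_abs, mul_pow, sq_abs]
  ring_nf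

lemma smu_zero_fn : Smu 1 (fun _ : E2 => (0:ℂ)) = 0 ∧ Pmu 1 (fun _ : E2 => (0:ℂ)) = 0 := by
  have h1 : l2Sq (fun _ : E2 => (0:ℂ)) = 0 := by simp [l2Sq]
  have h2 : gradSq (fun _ : E2 => (0:ℂ)) = 0 := by simp [gradSq, fderiv_const]
  have h3 : ∫ x : E2, Fmu 1 ((fun _ : E2 => (0:ℂ)) x) = 0 := by simp [Fmu]
  constructor
  · rw [Smu, Emu, h1, h2, h3]; ring
  · rw [Pmu, h1, h3]; ring

end MoreLemmas


section Key
open MeasureTheory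

lemma int_F_smul {c : ℝ} (hc0 : 0 ≤ c) (hc1 : c ≤ 1) {u : E2 → ℂ}
    (hu : MemLp u 2 volume) (hexp : ExpIntegrable u) :
    Integrable (fun x => Fmu 1 (c • u x)) := by
  have hFu := int_F hu hexp
  refine (hFu.const_mul (c^6)).mono' ?_ (Filter.Eventually.of_forall (fun x => ?_))
  · exact (Fmu_cont.comp_aestronglyMeasurable (hu.aestronglyMeasurable.const_smul c))
  · rw [Real.norm_eq_abs, abs_of_nonneg (Fmu_nonneg _)]
    exact Fmu_smul_le hc0 hc1 (u x)

lemma int_F_smul_le {c : ℝ} (hc0 : 0 ≤ c) (hc1 : c ≤ 1) {u : E2 → ℂ}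
    (hu : MemLp u 2 volume) (hexp : ExpIntegrable u) :
    ∫ x : E2, Fmu 1 (c • u x) ≤ c^6 * ∫ x : E2, Fmu 1 (u x) := by
  have hFu := int_F hu hexp
  calc ∫ x : E2, Fmu 1 (c • u x) ≤ ∫ x : E2, c^6 * Fmu 1 (u x) :=
        integral_mono (int_F_smul hc0 hc1 hu hexp) (hFu.const_mul _)
          (fun x => Fmu_smul_le hc0 hc1 (u x))
    _ = c^6 * ∫ x : E2, Fmu 1 (u x) := integral_const_mul _ _

lemma key_dichotomy (Q : E2 → ℂ) (hSQpos : 0 < Smu 1 Q)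
    (hPchar : IsLeast {s : ℝ | ∃ ψ : E2 → ℂ, MemH1 ψ ∧ ExpIntegrable ψ ∧
        ¬ ψ =ᵐ[volume] (0 : E2 → ℂ) ∧ Pmu 1 ψ = 0 ∧ s = Smu 1 ψ} (Smu 1 Q))
    {ψ : E2 → ℂ} (hmem : MemH1 ψ) (hexp : ExpIntegrable ψ) (hP : Pmu 1 ψ < 0) :
    2 * Smu 1 Q < gradSq ψ := by
  obtain ⟨hψ2, hψd, hψg⟩ := hmem
  have hne : ¬ ψ =ᵐ[volume] (0 : E2 → ℂ) := by
    intro h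
    have h1 := l2Sq_zero_of_ae h
    have h2 := intF_zero_of_ae h
    rw [Pmu, h1, h2] at hP
    norm_num at hP
  have hA : 0 < l2Sq ψ := l2Sq_pos hψ2 hne
  have hN1 : 0 ≤ ∫ x : E2, Fmu 1 (ψ x) := intF_nonneg ψ
  set A := l2Sq ψ with hA_def
  set N1 := ∫ x : E2, Fmu 1 (ψ x) with hN1_def
  have hmin0 : ∀ lam : ℝ, 0 ≤ min 1 |lam| := fun lam => le_min zero_le_one (abs_nonneg lam)
  have hmin1 : ∀ lam : ℝ, min 1 |lam| ≤ 1 := fun lam => min_le_left _ _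
  set g : ℝ → ℝ := fun lam => (min 1 |lam|)^2 * A / 2 - ∫ x : E2, Fmu 1 ((min 1 |lam|) • ψ x)
    with hg_def
  have hgcont : Continuous g := by
    rw [hg_def]
    apply Continuous.sub
    · fun_prop
    · apply continuous_of_dominated (bound := fun x => Fmu 1 (ψ x))
      · intro lam
        exact Fmu_cont.comp_aestronglyMeasurable (hψ2.aestronglyMeasurable.const_smul (min 1 |lam|))
      · intro lam
        refine Filter.Eventually.of_forall (fun x => ?_)
        rw [Real.norm_eq_abs, abs_of_nonneg (Fmu_nonneg _)]
        apply Fmu_mono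
        rw [norm_smul, Real.norm_eq_abs, abs_of_nonneg (hmin0 lam)]
        nlinarith [norm_nonneg (ψ x), hmin1 lam, hmin0 lam]
      · exact int_F hψ2 hexp
      · refine Filter.Eventually.of_forall (fun x => ?_)
        have hc : Continuous fun lam : ℝ => (min 1 |lam|) • ψ x := by fun_prop
        exact Fmu_cont.comp hc
  have hg1 : g 1 = Pmu 1 ψ := by
    have h1 : min (1:ℝ) |(1:ℝ)| = 1 := by norm_num
    rw [hg_def]
    simp only [h1, one_smul, one_pow, one_mul]
    rw [Pmu, ← hA_def, ← hN1_def]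
  set lam0 : ℝ := min (1/2) ((A/(2*(N1+1))) ^ ((1:ℝ)/4)) with hlam0_def
  have hlam0_pos : 0 < lam0 := lt_min (by norm_num) (Real.rpow_pos_of_pos (by positivity) _)
  have hlam0_le1 : lam0 ≤ 1 := le_trans (min_le_left _ _) (by norm_num)
  have hlam0_4 : lam0^4 ≤ A/(2*(N1+1)) := by
    have h1 : lam0 ≤ (A/(2*(N1+1))) ^ ((1:ℝ)/4) := min_le_right _ _
    calc lam0^4 ≤ ((A/(2*(N1+1))) ^ ((1:ℝ)/4))^4 := pow_le_pow_left₀ hlam0_pos.le h1 4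
      _ = A/(2*(N1+1)) := by
        rw [← Real.rpow_natCast ((A/(2*(N1+1))) ^ ((1:ℝ)/4)) 4,
          ← Real.rpow_mul (by positivity)]
        norm_num
  have hminlam0 : min 1 |lam0| = lam0 := by
    rw [abs_of_pos hlam0_pos]; exact min_eq_right hlam0_le1
  have hg_lam0 : 0 < g lam0 := by
    have hFle := int_F_smul_le hlam0_pos.le hlam0_le1 hψ2 hexp
    rw [hg_def]
    simp only [hminlam0]
    rw [← hN1_def] at hFle
    have h6 : lam0^4*N1 ≤ A/(2*(N1+1))*N1 := mul_le_mul_of_nonneg_right hlam0_4 hN1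
    have h7 : A/(2*(N1+1))*N1 < A/2 := by
      rw [div_mul_eq_mul_div, div_lt_div_iff₀ (by positivity) (by norm_num)]
      nlinarith
    have h8 : lam0^6 * N1 < lam0^2 * (A/2) := by
      have h9 : lam0^6 * N1 = lam0^2 * (lam0^4 * N1) := by ring
      rw [h9]
      exact mul_lt_mul_of_pos_left (lt_of_le_of_lt h6 h7) (by positivity)
    have : (∫ x : E2, Fmu 1 (lam0 • ψ x)) ≤ lam0^6 * N1 := hFle
    nlinarith
  have hsub := intermediate_value_Icc' hlam0_le1 hgcont.continuousOn
  have h0mem : (0:ℝ) ∈ Set.Icc (g 1) (g lam0) := ⟨by rw [hg1]; linarith, hg_lam0.le⟩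
  obtain ⟨lam, hlam_mem, hglam⟩ := hsub h0mem
  have hlam_pos : 0 < lam := lt_of_lt_of_le hlam0_pos hlam_mem.1
  have hlam_le1 : lam ≤ 1 := hlam_mem.2
  have hminlam : min 1 |lam| = lam := by
    rw [abs_of_pos hlam_pos]; exact min_eq_right hlam_le1
  have hlam_lt1 : lam < 1 := by
    rcases lt_or_eq_of_le hlam_le1 with h | h
    · exact h
    · exfalso; rw [h] at hglam; rw [hg1] at hglam; linarith
  have hglam' : lam^2 * A / 2 - ∫ x : E2, Fmu 1 (lam • ψ x) = 0 := by
    have := hglam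
    rw [hg_def] at this
    simp only [hminlam] at this
    exact this
  have hPφs : Pmu 1 (fun x => lam • ψ x) = 0 := by
    rw [Pmu, l2Sq_smul, ← hA_def]
    linarith [hglam']
  have hmemφs : MemH1 (fun x => lam • ψ x) := memH1_smul lam ⟨hψ2, hψd, hψg⟩
  have hexpφs := expint_smul hlam_pos hexp
  have hneφs : ¬ (fun x => lam • ψ x) =ᵐ[volume] (0 : E2 → ℂ) := by
    intro h
    apply hne
    filter_upwards [h] with x hx
    simp only [Pi.zero_apply] at hx ⊢
    rcases smul_eq_zero.1 hx with h' | h'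
    · exact absurd h' (ne_of_gt hlam_pos)
    · exact h'
  have hSle : Smu 1 Q ≤ Smu 1 (fun x => lam • ψ x) :=
    hPchar.2 ⟨(fun x => lam • ψ x), hmemφs, hexpφs, hneφs, hPφs, rfl⟩
  have hSφs : Smu 1 (fun x => lam • ψ x) = lam^2 * gradSq ψ / 2 := by
    rw [Smu_decomp, hPφs, gradSq_smul lam hψd]; ring
  rw [hSφs] at hSle
  by_contra hcon
  push_neg at hcon
  have hgs_nonneg := gradSq_nonneg ψ
  rcases eq_or_lt_of_le hgs_nonneg with h | h
  · rw [← h] at hSle; norm_num at hSle; linarith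
  · have hl2 : lam^2 < 1 := by nlinarith
    have := mul_lt_mul_of_pos_right hl2 h
    nlinarith

end Key


section Perturb
open MeasureTheory

lemma int_sq' {F : Type*} [NormedAddCommGroup F] {u : E2 → F} (hu : MemLp u 2 volume) :
    Integrable (fun x => ‖u x‖^2) := by
  have h := hu.integrable_norm_rpow (by norm_num) (by norm_num)
  have h2 : ((2:ℝ≥0∞).toReal) = (2:ℝ) := by norm_num
  rw [h2] at h
  refine h.congr (Filter.Eventually.of_forall (fun x => ?_))
  show ‖u x‖ ^ (2:ℝ) = ‖u x‖ ^ (2:ℕ)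
  rw [show (2:ℝ) = ((2:ℕ):ℝ) by norm_num, Real.rpow_natCast]

lemma sq_add_bound {a b c : ℝ} (ha : 0 ≤ a) (hb : 0 ≤ b) (hc : 0 < c) :
    (a+b)^2 ≤ (1+c)*a^2 + (1+1/c)*b^2 := by
  have h : c*(1/c) = 1 := by field_simp
  nlinarith [sq_nonneg (c*a - b), hc, sq_nonneg a, sq_nonneg b]

lemma sq_norm_perturb {F : Type*} [NormedAddCommGroup F] (a b : F) {c : ℝ} (hc : 0 < c) :
    ‖b‖^2 ≤ (1+c)*‖a‖^2 + (1+1/c)*‖b - a‖^2 := by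
  have h1 : ‖b‖ ≤ ‖a‖ + ‖b - a‖ := by
    calc ‖b‖ = ‖a + (b - a)‖ := by rw [show a + (b - a) = b from by abel]
      _ ≤ _ := norm_add_le _ _
  calc ‖b‖^2 ≤ (‖a‖ + ‖b - a‖)^2 := by nlinarith [norm_nonneg b, norm_nonneg a, norm_nonneg (b-a)]
    _ ≤ _ := sq_add_bound (norm_nonneg _) (norm_nonneg _) hc

lemma l2Sq_perturb {φ ψ : E2 → ℂ} (hφ : MemLp φ 2 volume) (hψ : MemLp ψ 2 volume)
    {c : ℝ} (hc : 0 < c) :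
    l2Sq ψ ≤ (1+c) * l2Sq φ + (1+1/c) * l2Sq (fun x => ψ x - φ x) := by
  have hint2 := (int_sq' hφ).const_mul (1+c)
  have hint3 := (int_sq' (hψ.sub hφ)).const_mul (1+1/c)
  simp only [Pi.sub_apply] at hint3
  rw [l2Sq, l2Sq, l2Sq]
  calc ∫ x : E2, ‖ψ x‖^2 ≤ ∫ x : E2, ((1+c)*‖φ x‖^2 + (1+1/c)*‖ψ x - φ x‖^2) := by
        apply integral_mono (int_sq' hψ) (hint2.add hint3)
        intro x
        exact sq_norm_perturb (φ x) (ψ x) hc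
    _ = _ := by
        rw [integral_add hint2 hint3, integral_const_mul, integral_const_mul]

lemma gradSq_perturb {φ ψ : E2 → ℂ} (hφd : Differentiable ℝ φ) (hψd : Differentiable ℝ ψ)
    (hφg : MemLp (fun x => fderiv ℝ φ x) 2 volume)
    (hψg : MemLp (fun x => fderiv ℝ ψ x) 2 volume)
    {c : ℝ} (hc : 0 < c) :
    gradSq ψ ≤ (1+c) * gradSq φ + (1+1/c) * gradSq (fun x => ψ x - φ x) := by
  have hfd : ∀ x, fderiv ℝ (fun y => ψ y - φ y) x = fderiv ℝ ψ x - fderiv ℝ φ x :=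
    fun x => fderiv_sub (hψd x) (hφd x)
  have hgsub : gradSq (fun x => ψ x - φ x) = ∫ x : E2, ‖fderiv ℝ ψ x - fderiv ℝ φ x‖^2 := by
    rw [gradSq]
    congr 1; funext x; rw [hfd x]
  have hint2 := (int_sq' hφg).const_mul (1+c)
  have hint3 := (int_sq' (hψg.sub hφg)).const_mul (1+1/c)
  simp only [Pi.sub_apply] at hint3
  rw [gradSq, gradSq, hgsub]
  calc ∫ x : E2, ‖fderiv ℝ ψ x‖^2
      ≤ ∫ x : E2, ((1+c)*‖fderiv ℝ φ x‖^2 + (1+1/c)*‖fderiv ℝ ψ x - fderiv ℝ φ x‖^2) := by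
        apply integral_mono (int_sq' hψg) (hint2.add hint3)
        intro x
        exact sq_norm_perturb (fderiv ℝ φ x) (fderiv ℝ ψ x) hc
    _ = _ := by
        rw [integral_add hint2 hint3, integral_const_mul, integral_const_mul]

lemma intF_perturb {φ ψ : E2 → ℂ} (hφ2 : MemLp φ 2 volume) (hφexp : ExpIntegrable φ)
    (hψ2 : MemLp ψ 2 volume) (hψexp : ExpIntegrable ψ) {c : ℝ} (hc : 0 < c) :
    (∫ x : E2, Fmu 1 (φ x)) - ∫ x : E2, Fmu 1 (ψ x) ≤
      (c * (∫ x : E2, (‖φ x‖ * Real.exp (4*π*‖φ x‖^2))^2)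
        + (1/c) * l2Sq (fun x => ψ x - φ x))/2 := by
  have hK2 := int_K2 hφ2.aestronglyMeasurable hφexp
  have hh2 := int_sq' (hψ2.sub hφ2)
  simp only [Pi.sub_apply] at hh2
  have hFφ := int_F hφ2 hφexp
  have hFψ := int_F hψ2 hψexp
  have hcc : c * (1/c) = 1 := by field_simp
  have hpoint : ∀ x : E2, Fmu 1 (φ x) - Fmu 1 (ψ x) ≤
      (c * (‖φ x‖ * Real.exp (4*π*‖φ x‖^2))^2 + (1/c) * ‖ψ x - φ x‖^2)/2 := by
    intro x
    have h1 := Fmu_diff_le (φ x) (ψ x)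
    have h2 : ‖φ x - ψ x‖ = ‖ψ x - φ x‖ := norm_sub_rev _ _
    rw [h2] at h1
    set K := ‖φ x‖ * Real.exp (4*π*‖φ x‖^2) with hK
    have hK0 : 0 ≤ K := by positivity
    have h3 : K * ‖ψ x - φ x‖ ≤ (c * K^2 + (1/c) * ‖ψ x - φ x‖^2)/2 := by
      nlinarith [sq_nonneg (c*K - ‖ψ x - φ x‖), hc, norm_nonneg (ψ x - φ x)]
    linarith
  have hint : Integrable (fun x : E2 => (c * (‖φ x‖ * Real.exp (4*π*‖φ x‖^2))^2
      + (1/c) * ‖ψ x - φ x‖^2)/2) := ((hK2.const_mul c).add (hh2.const_mul (1/c))).div_const 2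
  calc (∫ x : E2, Fmu 1 (φ x)) - ∫ x : E2, Fmu 1 (ψ x)
      = ∫ x : E2, (Fmu 1 (φ x) - Fmu 1 (ψ x)) := (integral_sub hFφ hFψ).symm
    _ ≤ ∫ x : E2, (c * (‖φ x‖ * Real.exp (4*π*‖φ x‖^2))^2 + (1/c) * ‖ψ x - φ x‖^2)/2 :=
        integral_mono (hFφ.sub hFψ) hint hpoint
    _ = _ := by
        rw [integral_div, integral_add (hK2.const_mul c) (hh2.const_mul (1/c)),
          integral_const_mul, integral_const_mul]
        rfl

end Perturb


/-- the set `𝒜̄⁺₁ = {φ ∈ H¹ : S₁(φ) < S₁(Q₁), P₁(φ) ≥ 0}` equals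
`𝒜⁺₁ ∪ {0}` and is open in `H¹(ℝ²)` (openness expressed via `H¹`-balls). -/
theorem Abar_plus_eq_and_open
    (Q : E2 → ℂ) (hQ : IsGroundState 1 Q) (hSQpos : 0 < Smu 1 Q)
    (hPchar : IsLeast {s : ℝ | ∃ ψ : E2 → ℂ, MemH1 ψ ∧ ExpIntegrable ψ ∧
        ¬ ψ =ᵐ[volume] (0 : E2 → ℂ) ∧ Pmu 1 ψ = 0 ∧ s = Smu 1 ψ} (Smu 1 Q)) :
    -- `𝒜̄⁺₁ = 𝒜⁺₁ ∪ {0}`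
    (∀ φ : E2 → ℂ, MemH1 φ → ExpIntegrable φ →
      ((Smu 1 φ < Smu 1 Q ∧ 0 ≤ Pmu 1 φ) ↔
        ((¬ φ =ᵐ[volume] (0 : E2 → ℂ) ∧ Smu 1 φ < Smu 1 Q ∧ 0 < Pmu 1 φ) ∨
          φ =ᵐ[volume] (0 : E2 → ℂ)))) ∧
    -- `𝒜̄⁺₁` is open in `H¹`
    (∀ φ : E2 → ℂ, MemH1 φ → ExpIntegrable φ → Smu 1 φ < Smu 1 Q → 0 ≤ Pmu 1 φ →
      ∃ ε : ℝ, 0 < ε ∧ ∀ ψ : E2 → ℂ, MemH1 ψ → ExpIntegrable ψ →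
        l2Sq (fun x => ψ x - φ x) + gradSq (fun x => ψ x - φ x) < ε ^ 2 →
        Smu 1 ψ < Smu 1 Q ∧ 0 ≤ Pmu 1 ψ) := by
  constructor
  · -- part 1
    intro φ hmem hexp
    constructor
    · rintro ⟨hS, hP⟩
      by_cases hz : φ =ᵐ[volume] (0 : E2 → ℂ)
      · exact Or.inr hz
      · left
        refine ⟨hz, hS, ?_⟩
        rcases lt_or_eq_of_le hP with h | h
        · exact h
        · exfalso
          have : Smu 1 Q ≤ Smu 1 φ := hPchar.2 ⟨φ, hmem, hexp, hz, h.symm, rfl⟩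
          linarith
    · rintro (⟨hz, hS, hP⟩ | hz)
      · exact ⟨hS, hP.le⟩
      · have hφ0 : φ = fun _ => (0:ℂ) :=
          (Continuous.ae_eq_iff_eq volume hmem.2.1.continuous continuous_const).1 hz
        rw [hφ0]
        exact ⟨by rw [smu_zero_fn.1]; exact hSQpos, by rw [smu_zero_fn.2]⟩
  · -- part 2: openness
    intro φ hmem hexp hS hP
    obtain ⟨hφ2, hφd, hφg⟩ := hmem
    have hpi := pi_pos'
    set B := ∫ x : E2, (‖φ x‖ * Real.exp (4*π*‖φ x‖^2))^2 with hB_def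
    have hB0 : 0 ≤ B := integral_nonneg (fun x => by positivity)
    have hGdec := Smu_decomp φ
    have hG2SQ : gradSq φ < 2 * Smu 1 Q := by
      have : gradSq φ ≤ 2 * Smu 1 φ := by linarith
      linarith
    set D := Smu 1 Q - Smu 1 φ with hD_def
    have hD : 0 < D := by rw [hD_def]; linarith
    set R := 2 * Smu 1 Q - gradSq φ with hR_def
    have hR : 0 < R := by rw [hR_def]; linarith
    have hGφ0 : 0 ≤ gradSq φ := gradSq_nonneg φ
    have hLφ0 : 0 ≤ l2Sq φ := l2Sq_nonneg φ
    set c₁ : ℝ := R/(2*(gradSq φ+1)) with hc1_def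
    have hc1 : 0 < c₁ := by rw [hc1_def]; positivity
    set c₂ : ℝ := min 1 (D/(gradSq φ + l2Sq φ + B + 1)) with hc2_def
    have hc2 : 0 < c₂ := lt_min one_pos (by positivity)
    have hc2le : c₂*(gradSq φ + l2Sq φ + B) ≤ D := by
      have h1 : c₂ ≤ D/(gradSq φ + l2Sq φ + B + 1) := min_le_right _ _
      have h2 : c₂*(gradSq φ + l2Sq φ + B) ≤
          D/(gradSq φ + l2Sq φ + B + 1)*(gradSq φ + l2Sq φ + B) :=
        mul_le_mul_of_nonneg_right h1 (by positivity)
      have h3 : D/(gradSq φ + l2Sq φ + B + 1)*(gradSq φ + l2Sq φ + B) ≤ D := by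
        rw [div_mul_eq_mul_div, div_le_iff₀ (by positivity)]
        nlinarith
      linarith
    set T : ℝ := 1 + 1/c₂ + 1/(2*c₂) with hT_def
    have hT : 0 < T := by rw [hT_def]; positivity
    have hc2' : c₂ ≤ 1 := min_le_left _ _
    clear_value B D R c₁ c₂ T
    have hmin_pos : 0 < min (R/(2*(1+1/c₁))) (D/(4*T)) :=
      lt_min (by positivity) (by positivity)
    refine ⟨Real.sqrt (min (R/(2*(1+1/c₁))) (D/(4*T))), Real.sqrt_pos.2 hmin_pos, ?_⟩
    intro ψ hmemψ hexpψ hball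
    obtain ⟨hψ2, hψd, hψg⟩ := hmemψ
    rw [Real.sq_sqrt hmin_pos.le] at hball
    have hgh0 : 0 ≤ gradSq (fun x => ψ x - φ x) := gradSq_nonneg _
    have hlh0 : 0 ≤ l2Sq (fun x => ψ x - φ x) := l2Sq_nonneg _
    set gh := gradSq (fun x => ψ x - φ x) with hgh_def
    set lh := l2Sq (fun x => ψ x - φ x) with hlh_def
    have hsum : lh + gh < min (R/(2*(1+1/c₁))) (D/(4*T)) := hball
    have hghR : gh ≤ R/(2*(1+1/c₁)) := by
      have := min_le_left (R/(2*(1+1/c₁))) (D/(4*T)); linarith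
    have hsumD : lh + gh ≤ D/(4*T) := by
      have := min_le_right (R/(2*(1+1/c₁))) (D/(4*T)); linarith
    -- (1) gradient bound : gradSq ψ ≤ 2 SQ
    have hgs : gradSq ψ ≤ 2 * Smu 1 Q := by
      have h1 := gradSq_perturb hφd hψd hφg hψg hc1
      have h2 : c₁ * gradSq φ ≤ R/2 := by
        rw [hc1_def, div_mul_eq_mul_div, div_le_div_iff₀ (by positivity) (by norm_num)]
        nlinarith
      have h3 : (1+1/c₁) * gh ≤ R/2 := by
        have hle : (1+1/c₁) * gh ≤ (1+1/c₁) * (R/(2*(1+1/c₁))) :=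
          mul_le_mul_of_nonneg_left hghR (by positivity)
        have heq : (1+1/c₁) * (R/(2*(1+1/c₁))) = R/2 := by
          field_simp
        linarith
      have h4 : (1+c₁) * gradSq φ = gradSq φ + c₁ * gradSq φ := by ring
      rw [← hgh_def] at h1
      linarith
    -- (2) positivity of P
    have hPψ : 0 ≤ Pmu 1 ψ := by
      by_contra hneg
      push_neg at hneg
      have := key_dichotomy Q hSQpos hPchar ⟨hψ2, hψd, hψg⟩ hexpψ hneg
      linarith
    -- (3) action bound
    have hSψ : Smu 1 ψ < Smu 1 Q := by
      have hg1 := gradSq_perturb hφd hψd hφg hψg hc2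
      have hl1 := l2Sq_perturb hφ2 hψ2 hc2
      have hF1 := intF_perturb hφ2 hexp hψ2 hexpψ hc2
      rw [← hgh_def] at hg1
      rw [← hlh_def] at hl1
      rw [← hlh_def, ← hB_def] at hF1
      have hSdefψ : Smu 1 ψ = gradSq ψ/2 + l2Sq ψ/2 - ∫ x : E2, Fmu 1 (ψ x) := by
        rw [Smu, Emu]; ring
      have hSdefφ : Smu 1 φ = gradSq φ/2 + l2Sq φ/2 - ∫ x : E2, Fmu 1 (φ x) := by
        rw [Smu, Emu]; ring
      have e1 : (1+c₂)*gradSq φ = gradSq φ + c₂*gradSq φ := by ring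
      have e2 : (1+c₂)*l2Sq φ = l2Sq φ + c₂*l2Sq φ := by ring
      have e3 : c₂*gradSq φ + c₂*l2Sq φ + c₂*B = c₂*(gradSq φ + l2Sq φ + B) := by ring
      -- ε² pieces
      have fA : (1+1/c₂) * gh + (1+1/c₂) * lh ≤ (1+1/c₂) * (D/(4*T)) := by
        have : (1+1/c₂) * (gh + lh) ≤ (1+1/c₂) * (D/(4*T)) :=
          mul_le_mul_of_nonneg_left (by linarith) (by positivity)
        linarith [this]
      have fB : (1/c₂) * lh ≤ (1/c₂) * (D/(4*T)) :=
        mul_le_mul_of_nonneg_left (by linarith) (by positivity)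
      have hq : 0 ≤ D/(4*T) := by positivity
      have hcoef : (1+1/c₂) + (1/c₂) ≤ 2*T := by
        rw [hT_def]
        have h0 : 0 < 1/(2*c₂) := by positivity
        have h2c : 2*(1/(2*c₂)) = 1/c₂ := by
          rw [eq_div_iff (ne_of_gt hc2)]
          field_simp
        linarith [h2c]
      have fT : ((1+1/c₂) + (1/c₂)) * (D/(4*T)) ≤ (2*T) * (D/(4*T)) :=
        mul_le_mul_of_nonneg_right hcoef hq
      have fTe : ((1+1/c₂) + (1/c₂)) * (D/(4*T)) =
          (1+1/c₂)*(D/(4*T)) + (1/c₂)*(D/(4*T)) := by ring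
      have fT2 : (2*T) * (D/(4*T)) = D/2 := by
        rw [eq_div_iff (by norm_num : (2:ℝ) ≠ 0)]
        field_simp
        ring
      linarith
    exact ⟨hSψ, hPψ⟩
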